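/- Let f₁, f₂ be smooth vector fields on a manifold with [f₂, [f₁,f₂]] = [f₁,f₂] (as holds for the curvature-radii frame, where f₁₂ := [f₁,f₂]). Suppose Φ is a diffeomorphism with Φ_*f₁ = ε₁f₁ and Φ_*f₂ = −f₂ for some ε₁ ∈ {±1}. If moreover [f₁ + f₁₂, f₂] = 0 then Φ_*-invariance forces a contradiction: Φ_*[f₁ + f₁₂, f₂] = ∓2f₁₂ ≠ 0, provided f₁₂ is nowhere zero. Hence any such isometry must satisfy Φ_*f₂ = +f₂. -/

import Mathlib

/-- Lie bracket of vector fields on a normed space (coordinate formula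
`[X,Y] = DY·X − DX·Y`). -/
noncomputable def lieBkt {F : Type*} [NormedAddCommGroup F] [NormedSpace ℝ F]
    (X Y : F → F) : F → F := fun p => fderiv ℝ Y p (X p) - fderiv ℝ X p (Y p)

/-- Naturality of the Lie bracket under a C² map relating `X` to `X'` and `Y` to `Y'`. -/
theorem lieBkt_natural {F : Type*} [NormedAddCommGroup F] [NormedSpace ℝ F]
    (Φ : F → F) (hΦ : ContDiff ℝ 2 Φ) (X Y X' Y' : F → F)
    (hX : Differentiable ℝ X) (hY : Differentiable ℝ Y)
    (hX' : Differentiable ℝ X') (hY' : Differentiable ℝ Y')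
    (hrX : ∀ p, fderiv ℝ Φ p (X p) = X' (Φ p))
    (hrY : ∀ p, fderiv ℝ Φ p (Y p) = Y' (Φ p)) :
    ∀ p, fderiv ℝ Φ p (lieBkt X Y p) = lieBkt X' Y' (Φ p) := by
  intro p
  have hΦd : Differentiable ℝ Φ := hΦ.differentiable (by norm_num)
  have hDΦ : Differentiable ℝ (fderiv ℝ Φ) :=
    (hΦ.fderiv_right (m := 1) le_rfl).differentiable one_ne_zero
  have hsym : fderiv ℝ (fderiv ℝ Φ) p (X p) (Y p) = fderiv ℝ (fderiv ℝ Φ) p (Y p) (X p) :=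
    second_derivative_symmetric (fun y => (hΦd y).hasFDerivAt) ((hDΦ p).hasFDerivAt) _ _
  have key : ∀ (Z Z' : F → F), Differentiable ℝ Z → Differentiable ℝ Z' →
      (∀ q, fderiv ℝ Φ q (Z q) = Z' (Φ q)) → ∀ v : F,
      fderiv ℝ Φ p (fderiv ℝ Z p v) + fderiv ℝ (fderiv ℝ Φ) p v (Z p)
        = fderiv ℝ Z' (Φ p) (fderiv ℝ Φ p v) := by
    intro Z Z' hZ hZ' hrZ v
    have hfun : (fun q => fderiv ℝ Φ q (Z q)) = fun q => Z' (Φ q) := funext hrZ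
    have h1 : fderiv ℝ (fun q => fderiv ℝ Φ q (Z q)) p
        = (fderiv ℝ Φ p).comp (fderiv ℝ Z p) + (fderiv ℝ (fderiv ℝ Φ) p).flip (Z p) :=
      fderiv_clm_apply (hDΦ p) (hZ p)
    have h2 : fderiv ℝ (fun q => Z' (Φ q)) p
        = (fderiv ℝ Z' (Φ p)).comp (fderiv ℝ Φ p) :=
      fderiv_comp p (hZ' (Φ p)) (hΦd p)
    have hh : ((fderiv ℝ Φ p).comp (fderiv ℝ Z p) + (fderiv ℝ (fderiv ℝ Φ) p).flip (Z p)) v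
        = ((fderiv ℝ Z' (Φ p)).comp (fderiv ℝ Φ p)) v := by
      rw [← h1, hfun, h2]
    simpa using hh
  have e1 : fderiv ℝ Φ p (fderiv ℝ Y p (X p))
      = fderiv ℝ Y' (Φ p) (fderiv ℝ Φ p (X p)) - fderiv ℝ (fderiv ℝ Φ) p (X p) (Y p) :=
    eq_sub_of_add_eq (key Y Y' hY hY' hrY (X p))
  have e2 : fderiv ℝ Φ p (fderiv ℝ X p (Y p))
      = fderiv ℝ X' (Φ p) (fderiv ℝ Φ p (Y p)) - fderiv ℝ (fderiv ℝ Φ) p (Y p) (X p) :=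
    eq_sub_of_add_eq (key X X' hX hX' hrX (Y p))
  simp only [lieBkt, map_sub]
  rw [e1, e2, hsym, hrX, hrY]
  abel

theorem stmt14 {F : Type*} [NormedAddCommGroup F] [NormedSpace ℝ F] [Nonempty F]
    (f₁ f₂ : F → F) (hf₁ : ContDiff ℝ 2 f₁) (hf₂ : ContDiff ℝ 2 f₂)
    (Φ : F ≃ F) (hΦ : ContDiff ℝ 2 (Φ : F → F)) (hΦinv : ContDiff ℝ 2 (Φ.symm : F → F))
    (hrel : ∀ p, lieBkt f₂ (lieBkt f₁ f₂) p = lieBkt f₁ f₂ p)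
    (hne : ∀ p, lieBkt f₁ f₂ p ≠ 0)
    (hcomm : ∀ p, lieBkt (fun q => f₁ q + lieBkt f₁ f₂ q) f₂ p = 0)
    (ε₁ : ℝ) (hε₁ : ε₁ = 1 ∨ ε₁ = -1)
    (hΦ1 : ∀ p, fderiv ℝ (Φ : F → F) p (f₁ p) = ε₁ • f₁ (Φ p))
    (hΦ2 : (∀ p, fderiv ℝ (Φ : F → F) p (f₂ p) = f₂ (Φ p)) ∨
           (∀ p, fderiv ℝ (Φ : F → F) p (f₂ p) = -f₂ (Φ p))) :
    ∀ p, fderiv ℝ (Φ : F → F) p (f₂ p) = f₂ (Φ p) := by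
  rcases hΦ2 with h | h
  · exact h
  exfalso
  have hd₁ : Differentiable ℝ f₁ := hf₁.differentiable (by norm_num)
  have hd₂ : Differentiable ℝ f₂ := hf₂.differentiable (by norm_num)
  have hD₁ : ContDiff ℝ 1 (fderiv ℝ f₁) := hf₁.fderiv_right (m := 1) le_rfl
  have hD₂ : ContDiff ℝ 1 (fderiv ℝ f₂) := hf₂.fderiv_right (m := 1) le_rfl
  have hc₁₂ : ContDiff ℝ 1 (lieBkt f₁ f₂) := by
    have h1 : ContDiff ℝ 1 (fun p => fderiv ℝ f₂ p (f₁ p)) :=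
      hD₂.clm_apply (hf₁.of_le (by norm_num))
    have h2 : ContDiff ℝ 1 (fun p => fderiv ℝ f₁ p (f₂ p)) :=
      hD₁.clm_apply (hf₂.of_le (by norm_num))
    exact h1.sub h2
  have hd₁₂ : Differentiable ℝ (lieBkt f₁ f₂) := hc₁₂.differentiable one_ne_zero
  -- Step 1: Φ_* f₁₂ = -ε₁ f₁₂
  have step1 : ∀ p, fderiv ℝ (Φ : F → F) p (lieBkt f₁ f₂ p) = (-ε₁) • lieBkt f₁ f₂ (Φ p) := by
    have hnat := lieBkt_natural (Φ : F → F) hΦ f₁ f₂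
      (fun q => ε₁ • f₁ q) (fun q => -f₂ q) hd₁ hd₂ (hd₁.const_smul ε₁) hd₂.neg
      (by intro p; simpa using hΦ1 p) (by intro p; simpa using h p)
    intro p
    rw [hnat p]
    have hbr : ∀ q, lieBkt (fun r => ε₁ • f₁ r) (fun r => -f₂ r) q
        = (-ε₁) • lieBkt f₁ f₂ q := by
      intro q
      simp only [lieBkt]
      rw [fderiv_fun_neg, fderiv_fun_const_smul (hd₁ q) ε₁]
      simp only [ContinuousLinearMap.neg_apply, ContinuousLinearMap.smul_apply,
        map_smul, map_neg]
      module
    exact hbr (Φ p)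
  -- Step 2: apply naturality to X = f₁ + f₁₂
  have hrXrel : ∀ p, fderiv ℝ (Φ : F → F) p (f₁ p + lieBkt f₁ f₂ p)
      = ε₁ • f₁ (Φ p) + (-ε₁) • lieBkt f₁ f₂ (Φ p) := by
    intro p
    rw [map_add, hΦ1 p, step1 p]
  have hnat2 := lieBkt_natural (Φ : F → F) hΦ (fun q => f₁ q + lieBkt f₁ f₂ q) f₂
      (fun q => ε₁ • f₁ q + (-ε₁) • lieBkt f₁ f₂ q) (fun q => -f₂ q)
      (hd₁.add hd₁₂) hd₂ ((hd₁.const_smul ε₁).add (hd₁₂.const_smul (-ε₁))) hd₂.neg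
      (by intro p; simpa using hrXrel p) (by intro p; simpa using h p)
  obtain ⟨p⟩ := ‹Nonempty F›
  have h0 := hnat2 p
  rw [hcomm p, map_zero] at h0
  set q := Φ p with hq
  have hbr2 : lieBkt (fun r => ε₁ • f₁ r + (-ε₁) • lieBkt f₁ f₂ r) (fun r => -f₂ r) q
      = (-(2 * ε₁)) • lieBkt f₁ f₂ q := by
    have hder : fderiv ℝ (fun r => ε₁ • f₁ r + (-ε₁) • lieBkt f₁ f₂ r) q
        = ε₁ • fderiv ℝ f₁ q + (-ε₁) • fderiv ℝ (lieBkt f₁ f₂) q := by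
      rw [fderiv_fun_add (f := fun r => ε₁ • f₁ r) (g := fun r => (-ε₁) • lieBkt f₁ f₂ r) ((hd₁ q).const_smul ε₁) ((hd₁₂ q).const_smul (-ε₁)),
        fderiv_fun_const_smul (hd₁ q) ε₁, fderiv_fun_const_smul (hd₁₂ q) (-ε₁)]
    have e : fderiv ℝ (lieBkt f₁ f₂) q (f₂ q)
        = lieBkt f₁ f₂ q + fderiv ℝ f₂ q (lieBkt f₁ f₂ q) := by
      have h' := hrel q
      simp only [lieBkt] at h' ⊢
      rw [sub_eq_iff_eq_add] at h'
      simpa [map_sub] using h'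
    simp only [lieBkt, map_sub] at hder e ⊢
    rw [hder, fderiv_fun_neg]
    simp only [ContinuousLinearMap.add_apply, ContinuousLinearMap.smul_apply,
      ContinuousLinearMap.neg_apply, map_add, map_smul, map_neg, map_sub]
    rw [e]
    module
  rw [hbr2] at h0
  have hε : (2 : ℝ) * ε₁ ≠ 0 := by rcases hε₁ with h' | h' <;> simp [h']
  have hz : lieBkt f₁ f₂ q = 0 := by
    have h0' := h0.symm
    rwa [smul_eq_zero, neg_eq_zero, or_iff_right hε] at h0'
  exact hne q hz
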